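/- Let f be a rank function on E = {1,...,a}. Define recursively: T^(0) = ∅; for j ≥ 0, E^(j) = E − T^(j), f^(j)(S) = f(S ∪ T^(j)) − f(T^(j)) for S ⊆ E^(j); let S^(j) be a nonempty subset of E^(j) attaining m^(j) = min_{S ⊆ E^(j), S ≠ ∅} f^(j)(S)/|S|; and T^(j+1) = T^(j) ∪ S^(j). The recursion terminates at some step t with E^(t+1) = ∅, so S^(0),...,S^(t) partition E. Define x* ∈ ℝ^a by x*_i = m^(j) for i ∈ S^(j). Then x* belongs to the polymatroid B(f,E) (i.e., x*_i ≥ 0 and x*(S) ≤ f(S) for all S ⊆ E) and x* lies on the dominant face: x*(E) = f(E). -/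

import Mathlib

open Finset

/-- A rank function on the finite ground set: normalized, increasing and submodular. -/
def IsRankFunction {α : Type*} [DecidableEq α] (f : Finset α → ℝ) : Prop :=
  f ∅ = 0 ∧ (∀ S T : Finset α, S ⊆ T → f S ≤ f T) ∧
    (∀ S T : Finset α, f (S ∩ T) + f (S ∪ T) ≤ f S + f T)

/-- `T⁽ʲ⁾ = S⁽⁰⁾ ∪ ⋯ ∪ S⁽ʲ⁻¹⁾`: the union of the blocks preceding block `j`. -/
def cumUnion {a t : ℕ} (S : Fin (t + 1) → Finset (Fin a)) (j : Fin (t + 1)) :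
    Finset (Fin a) :=
  (Finset.univ.filter fun i => i < j).biUnion S

/-- Natural-number-indexed version of `cumUnion`. -/
def TTn {a t : ℕ} (S : Fin (t + 1) → Finset (Fin a)) (n : ℕ) : Finset (Fin a) :=
  (Finset.univ.filter fun i : Fin (t + 1) => (i : ℕ) < n).biUnion S

lemma cumUnion_eq_TTn {a t : ℕ} (S : Fin (t + 1) → Finset (Fin a)) (j : Fin (t + 1)) :
    cumUnion S j = TTn S j := by
  unfold cumUnion TTn
  congr 1

lemma TTn_zero {a t : ℕ} (S : Fin (t + 1) → Finset (Fin a)) : TTn S 0 = ∅ := by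
  simp [TTn]

lemma TTn_succ {a t : ℕ} (S : Fin (t + 1) → Finset (Fin a)) (k : ℕ) (hk : k < t + 1) :
    TTn S (k + 1) = TTn S k ∪ S ⟨k, hk⟩ := by
  unfold TTn
  have h : (Finset.univ.filter fun i : Fin (t + 1) => (i : ℕ) < k + 1)
      = insert ⟨k, hk⟩ (Finset.univ.filter fun i : Fin (t + 1) => (i : ℕ) < k) := by
    ext i
    simp [Nat.lt_succ_iff_lt_or_eq, Fin.ext_iff, or_comm]
    exact Nat.le_iff_lt_or_eq.trans Or.comm
  rw [h, Finset.biUnion_insert, Finset.union_comm]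

theorem stmt8 (a t : ℕ) (f : Finset (Fin a) → ℝ) (hf : IsRankFunction f)
    (S : Fin (t + 1) → Finset (Fin a))
    (hSne : ∀ j, (S j).Nonempty)
    (hdisj : ∀ j k, j ≠ k → Disjoint (S j) (S k))
    (hcover : (Finset.univ : Finset (Fin (t + 1))).biUnion S = Finset.univ)
    (hSsub : ∀ j, S j ⊆ (cumUnion S j)ᶜ)
    (m : Fin (t + 1) → ℝ)
    (hm : ∀ j, m j = (f (S j ∪ cumUnion S j) - f (cumUnion S j)) / (S j).card)
    (hmin : ∀ j, ∀ U : Finset (Fin a), U.Nonempty → U ⊆ (cumUnion S j)ᶜ →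
      m j ≤ (f (U ∪ cumUnion S j) - f (cumUnion S j)) / U.card)
    (x : Fin a → ℝ) (hx : ∀ j, ∀ i ∈ S j, x i = m j) :
    (∀ i, 0 ≤ x i) ∧
    (∀ U : Finset (Fin a), ∑ i ∈ U, x i ≤ f U) ∧
    (∑ i, x i = f Finset.univ) := by
  obtain ⟨hf0, hfmono, hfsub⟩ := hf
  -- basic facts
  have hfiltop : (Finset.univ.filter fun j : Fin (t + 1) => (j : ℕ) < t + 1)
      = Finset.univ := Finset.filter_true_of_mem fun j _ => j.isLt
  have hTTtop : TTn S (t + 1) = Finset.univ := by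
    unfold TTn; rw [hfiltop, hcover]
  -- m j ≥ 0
  have hmnonneg : ∀ j, 0 ≤ m j := by
    intro j
    rw [hm j]
    apply div_nonneg _ (by positivity)
    have := hfmono (cumUnion S j) (S j ∪ cumUnion S j) Finset.subset_union_right
    linarith
  -- decomposition of sums over U into blocks
  have hpair : ∀ U : Finset (Fin a),
      Set.PairwiseDisjoint (↑(Finset.univ : Finset (Fin (t + 1))))
        (fun j => U ∩ S j) := fun U j _ k _ hjk =>
    (hdisj j k hjk).mono Finset.inter_subset_right Finset.inter_subset_right
  have hUdecomp : ∀ U : Finset (Fin a),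
      U = Finset.univ.biUnion (fun j => U ∩ S j) := by
    intro U
    ext i
    simp only [Finset.mem_biUnion, Finset.mem_inter, Finset.mem_univ, true_and]
    constructor
    · intro hi
      have hi2 : i ∈ (Finset.univ : Finset (Fin (t + 1))).biUnion S := by
        rw [hcover]; exact Finset.mem_univ i
      obtain ⟨j, _, hj⟩ := Finset.mem_biUnion.1 hi2
      exact ⟨j, hi, hj⟩
    · rintro ⟨j, hi, _⟩; exact hi
  have hsum : ∀ U : Finset (Fin a),
      ∑ i ∈ U, x i = ∑ j : Fin (t + 1), ((U ∩ S j).card : ℝ) * m j := by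
    intro U
    calc ∑ i ∈ U, x i
        = ∑ i ∈ Finset.univ.biUnion (fun j => U ∩ S j), x i := by rw [← hUdecomp U]
      _ = ∑ j : Fin (t + 1), ∑ i ∈ U ∩ S j, x i := Finset.sum_biUnion (hpair U)
      _ = ∑ j : Fin (t + 1), ((U ∩ S j).card : ℝ) * m j := by
          refine Finset.sum_congr rfl fun j _ => ?_
          rw [Finset.sum_congr rfl (fun i hi => hx j i (Finset.mem_inter.1 hi).2),
            Finset.sum_const, nsmul_eq_mul]
  -- key inequality, by induction on prefixes
  have key : ∀ (U : Finset (Fin a)) (k : ℕ), k ≤ t + 1 →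
      ∑ j ∈ Finset.univ.filter (fun j : Fin (t + 1) => (j : ℕ) < k),
        ((U ∩ S j).card : ℝ) * m j ≤ f (U ∩ TTn S k) := by
    intro U k
    induction k with
    | zero => intro _; simp [TTn_zero, hf0]
    | succ k ih =>
      intro hk1
      have hk : k < t + 1 := hk1
      set jk : Fin (t + 1) := ⟨k, hk⟩ with hjkdef
      have hfilter : (Finset.univ.filter fun j : Fin (t + 1) => (j : ℕ) < k + 1)
          = insert jk (Finset.univ.filter fun j : Fin (t + 1) => (j : ℕ) < k) := by
        ext i
        simp [jk, Nat.lt_succ_iff_lt_or_eq, Fin.ext_iff, or_comm]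
        exact Nat.le_iff_lt_or_eq.trans Or.comm
      rw [hfilter, Finset.sum_insert (by simp [jk])]
      have hcum : cumUnion S jk = TTn S k := by
        rw [cumUnion_eq_TTn]
      have hTT : TTn S (k + 1) = TTn S k ∪ S jk := TTn_succ S k hk
      set V := U ∩ TTn S k with hVdef
      set W := U ∩ S jk with hWdef
      have hVsub : V ⊆ TTn S k := Finset.inter_subset_right
      have hSdisj : Disjoint (S jk) (TTn S k) := by
        have h1 := hSsub jk
        rw [hcum] at h1
        exact Finset.disjoint_left.mpr fun i hi hiT => by
          have := h1 hi
          simp only [Finset.mem_compl] at this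
          exact this hiT
      have hWdisj : Disjoint W (TTn S k) :=
        hSdisj.mono_left Finset.inter_subset_right
      have hIH := ih (Nat.le_of_succ_le hk1)
      have h3 : U ∩ TTn S (k + 1) = W ∪ V := by
        rw [hTT, Finset.inter_union_distrib_left, Finset.union_comm]
      rcases eq_or_ne W ∅ with hWe | hWne
      · rw [h3, hWe, Finset.empty_union]
        simpa using hIH
      · have hne : W.Nonempty := Finset.nonempty_iff_ne_empty.2 hWne
        have hWsubc : W ⊆ (cumUnion S jk)ᶜ :=
          (Finset.inter_subset_right).trans (hSsub jk)
        have hm' := hmin jk W hne hWsubc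
        rw [hcum] at hm'
        have hcpos : (0 : ℝ) < W.card := by
          exact_mod_cast Finset.card_pos.2 hne
        have hkey1 : (W.card : ℝ) * m jk ≤ f (W ∪ TTn S k) - f (TTn S k) := by
          rw [mul_comm]
          exact (le_div_iff₀ hcpos).1 hm'
        have h1 : (W ∪ V) ∩ TTn S k = V := by
          rw [Finset.union_inter_distrib_right,
            Finset.disjoint_iff_inter_eq_empty.1 hWdisj,
            Finset.inter_eq_left.2 hVsub, Finset.empty_union]
        have h2 : (W ∪ V) ∪ TTn S k = W ∪ TTn S k := by
          rw [Finset.union_assoc, Finset.union_eq_right.2 hVsub]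
        have hsubmod := hfsub (W ∪ V) (TTn S k)
        rw [h1, h2] at hsubmod
        rw [h3]
        linarith
  -- key equality (telescoping) for the whole blocks
  have keyEq : ∀ (k : ℕ), k ≤ t + 1 →
      ∑ j ∈ Finset.univ.filter (fun j : Fin (t + 1) => (j : ℕ) < k),
        ((S j).card : ℝ) * m j = f (TTn S k) := by
    intro k
    induction k with
    | zero => intro _; simp [TTn_zero, hf0]
    | succ k ih =>
      intro hk1
      have hk : k < t + 1 := hk1
      set jk : Fin (t + 1) := ⟨k, hk⟩ with hjkdef
      have hfilter : (Finset.univ.filter fun j : Fin (t + 1) => (j : ℕ) < k + 1)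
          = insert jk (Finset.univ.filter fun j : Fin (t + 1) => (j : ℕ) < k) := by
        ext i
        simp [jk, Nat.lt_succ_iff_lt_or_eq, Fin.ext_iff, or_comm]
        exact Nat.le_iff_lt_or_eq.trans Or.comm
      rw [hfilter, Finset.sum_insert (by simp [jk])]
      have hcum : cumUnion S jk = TTn S k := by
        rw [cumUnion_eq_TTn]
      have hTT : TTn S (k + 1) = TTn S k ∪ S jk := TTn_succ S k hk
      have hcpos : ((S jk).card : ℝ) ≠ 0 := by
        exact_mod_cast Finset.card_ne_zero.2 (hSne jk)
      have hmk : ((S jk).card : ℝ) * m jk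
          = f (S jk ∪ TTn S k) - f (TTn S k) := by
        rw [hm jk, hcum, mul_div_cancel₀ _ hcpos]
      rw [hmk, ih (Nat.le_of_succ_le hk1), hTT, Finset.union_comm]
      ring
  refine ⟨?_, ?_, ?_⟩
  · -- nonnegativity
    intro i
    have hi2 : i ∈ (Finset.univ : Finset (Fin (t + 1))).biUnion S := by
      rw [hcover]; exact Finset.mem_univ i
    obtain ⟨j, _, hj⟩ := Finset.mem_biUnion.1 hi2
    rw [hx j i hj]
    exact hmnonneg j
  · -- polymatroid inequalities
    intro U
    have h := key U (t + 1) le_rfl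
    rw [hfiltop, hTTtop, Finset.inter_univ] at h
    rw [hsum U]
    exact h
  · -- dominant face
    have h := keyEq (t + 1) le_rfl
    rw [hfiltop, hTTtop] at h
    rw [hsum Finset.univ]
    rw [← h]
    exact Finset.sum_congr rfl fun j _ => by rw [Finset.univ_inter]
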